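/- Fix an integer q ≥ 2 and β ≥ 0, and let x = (x₁,...,x_q) ∈ Δ_q be a global minimizer of Φ_{β,h}^{(q)}. If h > 0 then x₁ > max{x₂,...,x_q}. If h < 0 then x₁ < min{x₂,...,x_q}. -/

import Mathlib

open Real Set Filter

noncomputable section

def pottsSimplex (q : ℕ) : Set (Fin q → ℝ) :=
  {x | (∀ k, 0 ≤ x k) ∧ ∑ k, x k = 1}

noncomputable def pottsPhi (q : ℕ) [NeZero q] (β h : ℝ) (x : Fin q → ℝ) : ℝ :=
  (∑ k, (-(β / 2) * x k ^ 2 + x k * Real.log (x k))) - h * x 0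

def IsPottsMinimizer (q : ℕ) [NeZero q] (β h : ℝ) (x : Fin q → ℝ) : Prop :=
  x ∈ pottsSimplex q ∧ ∀ y ∈ pottsSimplex q, pottsPhi q β h x ≤ pottsPhi q β h y

namespace PottsAux

noncomputable def phiF (β t : ℝ) : ℝ := -(β / 2) * t ^ 2 + t * Real.log t

lemma pottsPhi_eq (q : ℕ) [NeZero q] (β h : ℝ) (x : Fin q → ℝ) :
    pottsPhi q β h x = (∑ k, phiF β (x k)) - h * x 0 := rfl

lemma phiF_zero (β : ℝ) : phiF β 0 = 0 := by simp [phiF]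

lemma hasDerivAt_phiF (β t : ℝ) (ht : t ≠ 0) :
    HasDerivAt (phiF β) (-β * t + (Real.log t + 1)) t := by
  have h1 : HasDerivAt (fun s : ℝ => -(β / 2) * s ^ 2) (-(β / 2) * (2 * t ^ 1)) t :=
    (hasDerivAt_pow 2 t).const_mul (-(β / 2))
  have h2 := Real.hasDerivAt_mul_log ht
  have := h1.add h2
  rw [show -β * t + (Real.log t + 1) = -(β / 2) * (2 * t ^ 1) + (Real.log t + 1) by ring]
  exact this

lemma sum_update_pair {q : ℕ} (x : Fin q → ℝ) (i j : Fin q) (hij : i ≠ j) (a b : ℝ)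
    (g : ℝ → ℝ) :
    ∑ k, g (Function.update (Function.update x i a) j b k)
      = ∑ k, g (x k) + (g a + g b - g (x i) - g (x j)) := by
  set y := Function.update (Function.update x i a) j b with hy
  have hyi : y i = a := by rw [hy, Function.update_of_ne hij, Function.update_self]
  have hyj : y j = b := by rw [hy, Function.update_self]
  have hyk : ∀ k, k ≠ i → k ≠ j → y k = x k := by
    intro k hki hkj
    rw [hy, Function.update_of_ne hkj, Function.update_of_ne hki]
  have key : ∑ k, (g (y k) - g (x k)) = ∑ k ∈ ({i, j} : Finset (Fin q)), (g (y k) - g (x k)) := by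
    refine (Finset.sum_subset (Finset.subset_univ _) ?_).symm
    intro k _ hk
    simp only [Finset.mem_insert, Finset.mem_singleton] at hk
    push_neg at hk
    rw [hyk k hk.1 hk.2]
    ring
  rw [Finset.sum_pair hij, hyi, hyj] at key
  rw [Finset.sum_sub_distrib] at key
  linarith

/-- Moving mass `ε` from coordinate `j` to coordinate `i` gives a nonneg change of `Φ`. -/
lemma perturb_nonneg {q : ℕ} [NeZero q] {β h : ℝ} {x : Fin q → ℝ}
    (hx : IsPottsMinimizer q β h x) (i j : Fin q) (hij : i ≠ j) (ε : ℝ) (hε : 0 ≤ ε)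
    (hεj : ε ≤ x j) :
    0 ≤ phiF β (x i + ε) + phiF β (x j - ε) - phiF β (x i) - phiF β (x j)
        - h * ((if i = 0 then ε else 0) - (if j = 0 then ε else 0)) := by
  set y := Function.update (Function.update x i (x i + ε)) j (x j - ε) with hy
  have hyi : y i = x i + ε := by rw [hy, Function.update_of_ne hij, Function.update_self]
  have hyj : y j = x j - ε := by rw [hy, Function.update_self]
  have hyk : ∀ k, k ≠ i → k ≠ j → y k = x k := by
    intro k hki hkj
    rw [hy, Function.update_of_ne hkj, Function.update_of_ne hki]
  have hsum := sum_update_pair x i j hij (x i + ε) (x j - ε) (fun t => t)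
  have hsumphi := sum_update_pair x i j hij (x i + ε) (x j - ε) (phiF β)
  have hmem : y ∈ pottsSimplex q := by
    constructor
    · intro k
      by_cases hki : k = i
      · subst hki; rw [hyi]; have := hx.1.1 k; linarith
      by_cases hkj : k = j
      · subst hkj; rw [hyj]; linarith
      · rw [hyk k hki hkj]; exact hx.1.1 k
    · rw [show (∑ k, y k) = ∑ k, (fun t => t) (y k) from rfl, hsum]
      have := hx.1.2
      linarith
  have hy0 : y 0 = x 0 + ((if i = 0 then ε else 0) - (if j = 0 then ε else 0)) := by
    by_cases hi0 : i = 0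
    · subst hi0
      have hj0 : j ≠ 0 := fun hc => hij hc.symm
      rw [if_pos rfl, if_neg hj0, hyi]; ring
    · by_cases hj0 : j = 0
      · subst hj0
        rw [if_neg hi0, if_pos rfl, hyj]; ring
      · rw [if_neg hi0, if_neg hj0, hyk 0 (fun hc => hi0 hc.symm) (fun hc => hj0 hc.symm)]
        ring
  have hmin := hx.2 y hmem
  rw [pottsPhi_eq, pottsPhi_eq, hsumphi, hy0] at hmin
  linarith [hmin]

/-- Derivative nonnegativity at a boundary minimum. -/
lemma deriv_nonneg_of_eventually_nonneg {F : ℝ → ℝ} {d : ℝ} (hF : HasDerivAt F d 0)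
    (hF0 : F 0 = 0) (hev : ∀ᶠ ε in nhdsWithin (0:ℝ) (Set.Ioi 0), 0 ≤ F ε) : 0 ≤ d := by
  have hslope : Tendsto (slope F 0) (nhdsWithin (0:ℝ) (Set.Ioi 0)) (nhds d) := by
    refine (hasDerivAt_iff_tendsto_slope.1 hF).mono_left (nhdsWithin_mono 0 ?_)
    intro ε hε
    simp only [Set.mem_compl_iff, Set.mem_singleton_iff]
    exact ne_of_gt hε
  refine ge_of_tendsto hslope ?_
  filter_upwards [hev, self_mem_nhdsWithin] with ε hε1 hε2
  rw [slope_def_field, hF0]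
  have hpos : (0:ℝ) < ε := hε2
  rw [sub_zero, sub_zero]
  positivity

/-- All coordinates of a minimizer are positive. -/
lemma minimizer_pos {q : ℕ} [NeZero q] {β h : ℝ} {x : Fin q → ℝ}
    (hx : IsPottsMinimizer q β h x) : ∀ i, 0 < x i := by
  intro i
  rcases lt_or_eq_of_le (hx.1.1 i) with hpos | heq
  · exact hpos
  exfalso
  have hxi : x i = 0 := heq.symm
  -- find a positive coordinate
  obtain ⟨j, hj⟩ : ∃ j, 0 < x j := by
    by_contra hc
    push_neg at hc
    have hall : ∀ k, x k = 0 := fun k => le_antisymm (hc k) (hx.1.1 k)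
    have := hx.1.2
    simp [hall] at this
  have hij : i ≠ j := fun hc => absurd (hc ▸ hxi) hj.ne'
  set C : ℝ := h * ((if i = 0 then (1:ℝ) else 0) - (if j = 0 then (1:ℝ) else 0)) with hC
  set G : ℝ → ℝ := fun ε => -(β / 2) * ε ^ 2 + (phiF β (x j - ε) - phiF β (x j)) - C * ε with hG
  -- G has a derivative at 0
  have hinner : HasDerivAt (fun ε : ℝ => x j - ε) (-1) 0 := (hasDerivAt_id 0).const_sub (x j)
  have houter : HasDerivAt (phiF β) (-β * (x j) + (Real.log (x j) + 1)) (x j - 0) := by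
    rw [sub_zero]; exact hasDerivAt_phiF β (x j) hj.ne'
  have hcomp : HasDerivAt (fun ε : ℝ => phiF β (x j - ε))
      ((-β * (x j) + (Real.log (x j) + 1)) * (-1)) 0 := HasDerivAt.comp 0 houter hinner
  have hsq : HasDerivAt (fun ε : ℝ => -(β / 2) * ε ^ 2) (-(β / 2) * (2 * (0:ℝ) ^ 1)) 0 :=
    (hasDerivAt_pow 2 (0:ℝ)).const_mul (-(β / 2))
  have hlin : HasDerivAt (fun ε : ℝ => C * ε) C 0 := by
    simpa using (hasDerivAt_id (0:ℝ)).const_mul C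
  set d : ℝ := -(β / 2) * (2 * (0:ℝ) ^ 1) + ((-β * (x j) + (Real.log (x j) + 1)) * (-1) - 0) - C
    with hd
  have hGd : HasDerivAt G d 0 := ((hsq.add (hcomp.sub (hasDerivAt_const 0 (phiF β (x j))))).sub hlin)
  have hG0 : G 0 = 0 := by simp [hG]
  have hGslope : Tendsto (slope G 0) (nhdsWithin (0:ℝ) (Set.Ioi 0)) (nhds d) := by
    refine (hasDerivAt_iff_tendsto_slope.1 hGd).mono_left (nhdsWithin_mono 0 ?_)
    intro ε hε
    simp only [Set.mem_compl_iff, Set.mem_singleton_iff]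
    exact ne_of_gt hε
  -- eventual strict negativity of F
  have h1 : ∀ᶠ ε in nhdsWithin (0:ℝ) (Set.Ioi 0), Real.log ε < -(|d| + 1) :=
    Real.tendsto_log_nhdsGT_zero.eventually (eventually_lt_atBot _)
  have h2 : ∀ᶠ ε in nhdsWithin (0:ℝ) (Set.Ioi 0), slope G 0 ε < |d| + 1 :=
    hGslope.eventually_lt_const (by linarith [abs_nonneg d, le_abs_self d])
  have h3 : Set.Ioc (0:ℝ) (x j) ∈ nhdsWithin (0:ℝ) (Set.Ioi 0) := Ioc_mem_nhdsGT hj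
  obtain ⟨ε, hlog, hslp, hmemIoc⟩ := (h1.and (h2.and (eventually_of_mem h3 (fun _ h => h)))).exists
  have hεpos : 0 < ε := hmemIoc.1
  have hεle : ε ≤ x j := hmemIoc.2
  have hpert := perturb_nonneg hx i j hij ε hεpos.le hεle
  -- rewrite the perturbation quantity
  have hif : h * ((if i = 0 then ε else 0) - (if j = 0 then ε else 0)) = C * ε := by
    rw [hC]; split_ifs <;> ring
  have hphiε : phiF β (x i + ε) = -(β / 2) * ε ^ 2 + ε * Real.log ε := by
    rw [hxi, zero_add, phiF]
  have hFG : phiF β (x i + ε) + phiF β (x j - ε) - phiF β (x i) - phiF β (x j)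
      - h * ((if i = 0 then ε else 0) - (if j = 0 then ε else 0))
      = ε * Real.log ε + G ε := by
    rw [hphiε, hxi, phiF_zero, hif, hG]; ring
  rw [hFG] at hpert
  -- but ε log ε + G ε < 0
  have hGε : G ε < (|d| + 1) * ε := by
    have := hslp
    rw [slope_def_field, hG0, sub_zero, sub_zero] at this
    calc G ε = (G ε / ε) * ε := by field_simp
    _ < (|d| + 1) * ε := by exact mul_lt_mul_of_pos_right this hεpos
  have hlogε : ε * Real.log ε < ε * (-(|d| + 1)) := by
    exact mul_lt_mul_of_pos_left hlog hεpos
  nlinarith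


/-- Swap comparison: weak inequality. -/
lemma swap_ineq {q : ℕ} [NeZero q] {β h : ℝ} {x : Fin q → ℝ}
    (hx : IsPottsMinimizer q β h x) (k : Fin q) : h * x k ≤ h * x 0 := by
  set y : Fin q → ℝ := fun i => x (Equiv.swap 0 k i) with hy
  have hmem : y ∈ pottsSimplex q := by
    refine ⟨fun i => hx.1.1 _, ?_⟩
    rw [hy]
    rw [Equiv.sum_comp (Equiv.swap 0 k) x]
    exact hx.1.2
  have hmin := hx.2 y hmem
  rw [pottsPhi_eq, pottsPhi_eq] at hmin
  have hsum : ∑ i, phiF β (y i) = ∑ i, phiF β (x i) :=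
    Equiv.sum_comp (Equiv.swap 0 k) (fun i => phiF β (x i))
  have hy0 : y 0 = x k := by rw [hy]; simp [Equiv.swap_apply_left]
  rw [hsum, hy0] at hmin
  linarith

/-- Interior first-order condition along moving mass from `j` to `i`. -/
lemma interior_ineq {q : ℕ} [NeZero q] {β h : ℝ} {x : Fin q → ℝ}
    (hx : IsPottsMinimizer q β h x) (i j : Fin q) (hij : i ≠ j)
    (hi : 0 < x i) (hj : 0 < x j) :
    0 ≤ (-β * x i + (Real.log (x i) + 1)) - (-β * x j + (Real.log (x j) + 1))
        - h * ((if i = 0 then (1:ℝ) else 0) - (if j = 0 then (1:ℝ) else 0)) := by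
  set C : ℝ := h * ((if i = 0 then (1:ℝ) else 0) - (if j = 0 then (1:ℝ) else 0)) with hC
  set F : ℝ → ℝ := fun ε => phiF β (x i + ε) + phiF β (x j - ε)
      - phiF β (x i) - phiF β (x j) - C * ε with hF
  have hinner1 : HasDerivAt (fun ε : ℝ => x i + ε) 1 0 := (hasDerivAt_id 0).const_add (x i)
  have houter1 : HasDerivAt (phiF β) (-β * (x i) + (Real.log (x i) + 1)) (x i + 0) := by
    rw [add_zero]; exact hasDerivAt_phiF β (x i) hi.ne'
  have hcomp1 : HasDerivAt (fun ε : ℝ => phiF β (x i + ε))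
      ((-β * (x i) + (Real.log (x i) + 1)) * 1) 0 := HasDerivAt.comp 0 houter1 hinner1
  have hinner2 : HasDerivAt (fun ε : ℝ => x j - ε) (-1) 0 := (hasDerivAt_id 0).const_sub (x j)
  have houter2 : HasDerivAt (phiF β) (-β * (x j) + (Real.log (x j) + 1)) (x j - 0) := by
    rw [sub_zero]; exact hasDerivAt_phiF β (x j) hj.ne'
  have hcomp2 : HasDerivAt (fun ε : ℝ => phiF β (x j - ε))
      ((-β * (x j) + (Real.log (x j) + 1)) * (-1)) 0 := HasDerivAt.comp 0 houter2 hinner2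
  have hlin : HasDerivAt (fun ε : ℝ => C * ε) C 0 := by
    simpa using (hasDerivAt_id (0:ℝ)).const_mul C
  have hFd : HasDerivAt F
      ((-β * (x i) + (Real.log (x i) + 1)) * 1 + (-β * (x j) + (Real.log (x j) + 1)) * (-1)
        - 0 - 0 - C) 0 :=
    (((hcomp1.add hcomp2).sub (hasDerivAt_const 0 (phiF β (x i)))).sub
        (hasDerivAt_const 0 (phiF β (x j)))).sub hlin
  have hF0 : F 0 = 0 := by simp [hF]
  have hev : ∀ᶠ ε in nhdsWithin (0:ℝ) (Set.Ioi 0), 0 ≤ F ε := by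
    filter_upwards [Ioc_mem_nhdsGT hj, self_mem_nhdsWithin] with ε hε1 hε2
    have hpert := perturb_nonneg hx i j hij ε hε1.1.le hε1.2
    have hif : h * ((if i = 0 then ε else 0) - (if j = 0 then ε else 0)) = C * ε := by
      rw [hC]; split_ifs <;> ring
    rw [hif] at hpert
    exact hpert
  have := deriv_nonneg_of_eventually_nonneg hFd hF0 hev
  rw [hC] at this ⊢
  linarith

end PottsAux

open PottsAux in
/-- The first coordinate of a global minimizer strictly dominates (resp. is strictly
dominated by) all the others when `h > 0` (resp. `h < 0`) (Lemma 5.2(2)). -/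
theorem potts_minimizer_field_sign (q : ℕ) [NeZero q] (hq : 2 ≤ q) (β h : ℝ) (hβ : 0 ≤ β)
    (x : Fin q → ℝ) (hx : IsPottsMinimizer q β h x) :
    (0 < h → ∀ k : Fin q, k ≠ 0 → x k < x 0) ∧
    (h < 0 → ∀ k : Fin q, k ≠ 0 → x 0 < x k) := by
  constructor
  · intro hh k hk
    have hweak : x k ≤ x 0 := le_of_mul_le_mul_left (by simpa [mul_comm] using swap_ineq hx k) hh
    rcases lt_or_eq_of_le hweak with hlt | heq
    · exact hlt
    exfalso
    have h0 := minimizer_pos hx 0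
    have hkpos := minimizer_pos hx k
    have := interior_ineq hx 0 k (fun hc => hk hc.symm) h0 hkpos
    rw [if_pos rfl, if_neg hk, heq] at this
    nlinarith
  · intro hh k hk
    have hweak : x 0 ≤ x k := by nlinarith [swap_ineq hx k]
    rcases lt_or_eq_of_le hweak with hlt | heq
    · exact hlt
    exfalso
    have h0 := minimizer_pos hx 0
    have hkpos := minimizer_pos hx k
    have := interior_ineq hx k 0 hk hkpos h0
    rw [if_pos rfl, if_neg hk, ← heq] at this
    nlinarith
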